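/- For m ≤ n-4, k ≤ n-3 with n ≥ 5, letting x = 0^m 1 0^{n-m-3} 1 1, x̃ = 0^m 1 0^{n-m-4} 1 0 0, y_k = 0^k, and ỹ_k = 0^{k-1} 1, one has ω_{y_k}(x) < ω_{y_k}(x̃) and ω_{ỹ_k}(x) > ω_{ỹ_k}(x̃). -/

import Mathlib

open List

private lemma concat_inj (b : Bool) :
    Function.Injective (fun t : List Bool => t ++ [b]) := by
  intro u v h
  simpa using congrArg List.dropLast h

private lemma cnt_map (f : List Bool → List Bool) (hf : Function.Injective f)
    (l : List (List Bool)) (a : List Bool) : (l.map f).count (f a) = l.count a := by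
  induction l with
  | nil => simp
  | cons b l ih => simp [List.count_cons, ih, hf.eq_iff]

private lemma cnt_concat_eq (x : List Bool) (b : Bool) (t : List Bool) :
    (x ++ [b]).sublists.count (t ++ [b])
      = x.sublists.count (t ++ [b]) + x.sublists.count t := by
  rw [List.sublists_concat, List.count_append]
  congr 1
  exact cnt_map _ (concat_inj b) x.sublists t

private lemma cnt_concat_ne (x : List Bool) (b : Bool) (s : List Bool)
    (h : ∀ t, s ≠ t ++ [b]) :
    (x ++ [b]).sublists.count s = x.sublists.count s := by
  rw [List.sublists_concat, List.count_append]
  have hz : ((x.sublists.map (fun t => t ++ [b])).count s) = 0 := by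
    rw [List.count_eq_zero]
    intro hm
    rcases List.mem_map.mp hm with ⟨t, _, ht⟩
    exact h t ht.symm
  omega

private lemma cnt_nil (x : List Bool) : x.sublists.count ([] : List Bool) = 1 := by
  induction x using List.reverseRecOn with
  | nil => simp
  | append_singleton x b ih =>
      rw [cnt_concat_ne x b [] (by intro t h; simp at h)]
      exact ih

private lemma cntZ (x : List Bool) (k : ℕ) :
    x.sublists.count (List.replicate k false) = (x.count false).choose k := by
  induction x using List.reverseRecOn generalizing k with
  | nil =>
      cases k with
      | zero => simp
      | succ k => simp [List.replicate_succ]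
  | append_singleton x b ih =>
      cases b with
      | true =>
          rw [cnt_concat_ne x true (List.replicate k false) ?_]
          · rw [ih]; simp
          · intro t h
            have : true ∈ List.replicate k false := by
              rw [h]; exact List.mem_append_right _ (List.mem_singleton.mpr rfl)
            simpa using List.eq_of_mem_replicate this
      | false =>
          cases k with
          | zero =>
              simp only [List.replicate_zero]
              rw [cnt_nil]
              simp
          | succ k =>
              rw [(List.replicate_succ' : List.replicate (k + 1) false = _), cnt_concat_eq,
                ← (List.replicate_succ' : List.replicate (k + 1) false = _), ih, ih]
              have hc : (x ++ [false]).count false = x.count false + 1 := by simp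
              rw [hc, Nat.choose_succ_succ']; omega

private lemma ne_concat_false (j : ℕ) (t : List Bool) :
    List.replicate j false ++ [true] ≠ t ++ [false] := by
  intro h
  have := congrArg List.getLast? h
  simp [List.getLast?_concat] at this

private lemma cnt_zstring (a j : ℕ) :
    (List.replicate a false).sublists.count (List.replicate j false ++ [true]) = 0 := by
  rw [List.count_eq_zero]
  intro hm
  have hs := List.mem_sublists.mp hm
  have : true ∈ List.replicate a false :=
    hs.subset (List.mem_append_right _ (List.mem_singleton.mpr rfl))
  simpa using List.eq_of_mem_replicate this

private lemma cnt_peel (x : List Bool) (r j : ℕ) :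
    (x ++ List.replicate r false).sublists.count (List.replicate j false ++ [true])
      = x.sublists.count (List.replicate j false ++ [true]) := by
  induction r with
  | zero => simp
  | succ r ih =>
      rw [(List.replicate_succ' : List.replicate (r + 1) false = _), ← List.append_assoc,
        cnt_concat_ne _ false _ (ne_concat_false j), ih]

private lemma omega_x_zk (m r k : ℕ) :
    (List.replicate m false ++ [true] ++ List.replicate r false ++
        [true, true]).sublists.count (List.replicate k false) = (m + r).choose k := by
  rw [cntZ]
  congr 1
  simp [List.count_append]

private lemma omega_xt_zk (m r k : ℕ) :
    (List.replicate m false ++ [true] ++ List.replicate r false ++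
        [true, false, false]).sublists.count (List.replicate k false)
      = (m + r + 2).choose k := by
  rw [cntZ]
  congr 1
  simp [List.count_append]
  omega

private lemma omega_x_s (m r j : ℕ) :
    (List.replicate m false ++ [true] ++ List.replicate r false ++
        [true, true]).sublists.count (List.replicate j false ++ [true])
      = m.choose j + ((m + r).choose j + (m + r).choose j) := by
  have hx : List.replicate m false ++ [true] ++ List.replicate r false ++ [true, true]
      = ((List.replicate m false ++ [true] ++ List.replicate r false) ++ [true]) ++ [true] := by
    simp
  rw [hx, cnt_concat_eq, cnt_concat_eq, cnt_peel, cnt_concat_eq, cnt_zstring,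
    cntZ, cntZ, cntZ]
  have h1 : (List.replicate m false).count false = m := by simp
  have h2 : ((List.replicate m false ++ [true] ++ List.replicate r false) ++ [true]).count false
      = m + r := by simp [List.count_append]
  have h3 : (List.replicate m false ++ [true] ++ List.replicate r false).count false
      = m + r := by simp [List.count_append]
  rw [h1, h2, h3]
  omega

private lemma omega_xt_s (m r j : ℕ) :
    (List.replicate m false ++ [true] ++ List.replicate r false ++
        [true, false, false]).sublists.count (List.replicate j false ++ [true])
      = m.choose j + (m + r).choose j := by
  have hx : List.replicate m false ++ [true] ++ List.replicate r false ++ [true, false, false]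
      = ((((List.replicate m false ++ [true] ++ List.replicate r false) ++ [true]) ++ [false])
          ++ [false]) := by simp
  rw [hx, cnt_concat_ne _ false _ (ne_concat_false j),
    cnt_concat_ne _ false _ (ne_concat_false j), cnt_concat_eq, cnt_peel,
    cnt_concat_eq, cnt_zstring, cntZ, cntZ]
  have h1 : (List.replicate m false).count false = m := by simp
  have h3 : (List.replicate m false ++ [true] ++ List.replicate r false).count false
      = m + r := by simp [List.count_append]
  rw [h1, h3]
  omega

/-- For `n ≥ 5`, `m ≤ n-4`, `1 ≤ k ≤ n-3`, letting `x = 0^m 1 0^{n-m-3} 1 1`,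
`x̃ = 0^m 1 0^{n-m-4} 1 0 0`, `y_k = 0^k` and `ỹ_k = 0^{k-1} 1`, one has
`ω_{y_k}(x) < ω_{y_k}(x̃)` and `ω_{ỹ_k}(x) > ω_{ỹ_k}(x̃)`, where the embedding
number is computed via `List.sublists.count`. -/
theorem stmt_4 (n m k : ℕ) (hn : 5 ≤ n) (hm : m + 4 ≤ n) (hk1 : 1 ≤ k)
    (hk : k ≤ n - 3) :
    (((List.replicate m false ++ [true] ++ List.replicate (n - m - 3) false ++
        [true, true]).sublists.count (List.replicate k false))
      < ((List.replicate m false ++ [true] ++ List.replicate (n - m - 4) false ++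
        [true, false, false]).sublists.count (List.replicate k false))) ∧
    (((List.replicate m false ++ [true] ++ List.replicate (n - m - 3) false ++
        [true, true]).sublists.count (List.replicate (k - 1) false ++ [true]))
      > ((List.replicate m false ++ [true] ++ List.replicate (n - m - 4) false ++
        [true, false, false]).sublists.count (List.replicate (k - 1) false ++ [true]))) := by
  obtain ⟨j, rfl⟩ : ∃ j, k = j + 1 := ⟨k - 1, by omega⟩
  rw [omega_x_zk, omega_xt_zk, omega_x_s, omega_xt_s]
  have e1 : m + (n - m - 3) = n - 3 := by omega
  have e2 : m + (n - m - 4) = n - 4 := by omega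
  rw [e1, e2]
  have e3 : n - 4 + 2 = (n - 3) + 1 := by omega
  have e4 : (j + 1) - 1 = j := by omega
  rw [e3, e4]
  constructor
  · have hsum : (n - 3 + 1).choose (j + 1) = (n - 3).choose j + (n - 3).choose (j + 1) :=
      Nat.choose_succ_succ _ _
    have hp : 0 < (n - 3).choose j := Nat.choose_pos (by omega)
    omega
  · have hle : (n - 4).choose j ≤ (n - 3).choose j :=
      Nat.choose_le_choose j (by omega)
    have hp : 0 < (n - 4).choose j := Nat.choose_pos (by omega)
    omega
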